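/- A decision-conflict logit ρ with representation (u,D) is monotonic (i.e. A ⊇ B implies D(A) ≥ D(B) for all menus A, B) if and only if ρ satisfies axiom A4: for all menus A, B with A ⊋ B, ρ(B,B) · (ρ(A,A) − ρ(B,A))/ρ(B,A) ≥ (ρ(o,B) − ρ(o,A))/ρ(o,A). -/

import Mathlib

open Finset

variable {X : Type*} [Fintype X] [DecidableEq X]

/-- The probability of choosing the outside option (deferring) at menu `A`. -/
noncomputable def defer (ρ : Finset X → X → ℝ) (A : Finset X) : ℝ :=
  1 - ∑ a ∈ A, ρ A a

/-- `ρ` is a random non-forced choice model on `X`. -/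
def IsRNFC (ρ : Finset X → X → ℝ) : Prop :=
  ∀ A : Finset X, A.Nonempty →
    (∀ a ∈ A, 0 ≤ ρ A a ∧ ρ A a ≤ 1) ∧
    (∀ a, a ∉ A → ρ A a = 0) ∧
    (∑ a ∈ A, ρ A a) ≤ 1

/-- `ρ` is a decision-conflict logit with representation `(u, D)`. -/
def IsDCL (ρ : Finset X → X → ℝ) (u : X → ℝ) (D : Finset X → ℝ) : Prop :=
  (∀ a, 0 < u a) ∧
  (∀ A : Finset X, A.Nonempty → 0 ≤ D A ∧ (D A = 0 ↔ A.card = 1)) ∧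
  (∀ A : Finset X, A.Nonempty → ∀ a ∈ A, ρ A a = u a / ((∑ b ∈ A, u b) + D A))

lemma key_iff (sA sB dA dB : ℝ) (hsA : 0 < sA) (hsB : 0 < sB) (hBA : sB < sA)
    (hdA : 0 < dA) (hdB : 0 ≤ dB) :
    ((sB/(sB+dB)) * ((sA/(sA+dA) - sB/(sA+dA)) / (sB/(sA+dA))) ≥
      (dB/(sB+dB) - dA/(sA+dA)) / (dA/(sA+dA))) ↔ dB ≤ dA := by
  have h1 : 0 < sB + dB := by linarith
  have h2 : 0 < sA + dA := by linarith
  have L : (sB/(sB+dB)) * ((sA/(sA+dA) - sB/(sA+dA)) / (sB/(sA+dA)))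
      = (sA - sB)/(sB+dB) := by
    field_simp
  have R : (dB/(sB+dB) - dA/(sA+dA)) / (dA/(sA+dA))
      = (dB*(sA+dA) - dA*(sB+dB))/(dA*(sB+dB)) := by
    field_simp
  rw [L, R, ge_iff_le, div_le_div_iff₀ (by positivity) h1]
  constructor
  · intro h
    nlinarith [mul_pos hsA h1, mul_nonneg (mul_nonneg (sub_nonneg.2 h) hsA.le) h1.le]
  · intro h
    nlinarith [mul_pos hsA h1]

/-- Monotonicity of the complexity function `D` is equivalent to Axiom A4
(Active-Choice Lower Bounds). -/
theorem stmt3 (ρ : Finset X → X → ℝ) (hρ : IsRNFC ρ)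
    (u : X → ℝ) (D : Finset X → ℝ) (h : IsDCL ρ u D) :
    (∀ A B : Finset X, B.Nonempty → B ⊆ A → D B ≤ D A) ↔
      (∀ A B : Finset X, B.Nonempty → B ⊂ A →
        (∑ b ∈ B, ρ B b) * (((∑ a ∈ A, ρ A a) - ∑ b ∈ B, ρ A b) / ∑ b ∈ B, ρ A b)
          ≥ (defer ρ B - defer ρ A) / defer ρ A) := by
  obtain ⟨hu, hD, hform⟩ := h
  have spos : ∀ A : Finset X, A.Nonempty → 0 < ∑ a ∈ A, u a := fun A hA =>
    Finset.sum_pos (fun a _ => hu a) hA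
  have sumsub : ∀ A B : Finset X, A.Nonempty → B ⊆ A →
      ∑ b ∈ B, ρ A b = (∑ b ∈ B, u b) / ((∑ a ∈ A, u a) + D A) := by
    intro A B hA hBA
    rw [Finset.sum_div]
    exact Finset.sum_congr rfl fun b hb => hform A hA b (hBA hb)
  have deferEq : ∀ A : Finset X, A.Nonempty →
      defer ρ A = D A / ((∑ a ∈ A, u a) + D A) := by
    intro A hA
    have hpos : 0 < (∑ a ∈ A, u a) + D A := by
      have := (hD A hA).1; have := spos A hA; linarith
    rw [defer, sumsub A A hA (subset_refl A)]
    field_simp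
    ring
  -- setup for a strict pair
  have main : ∀ A B : Finset X, B.Nonempty → B ⊂ A →
      (((∑ b ∈ B, ρ B b) * (((∑ a ∈ A, ρ A a) - ∑ b ∈ B, ρ A b) / ∑ b ∈ B, ρ A b)
          ≥ (defer ρ B - defer ρ A) / defer ρ A) ↔ D B ≤ D A) := by
    intro A B hB hBA
    have hA : A.Nonempty := hB.mono hBA.subset
    have hsB := spos B hB
    have hsA := spos A hA
    have hlt : (∑ b ∈ B, u b) < ∑ a ∈ A, u a := by
      obtain ⟨a, haA, haB⟩ := Finset.exists_of_ssubset hBA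
      exact Finset.sum_lt_sum_of_subset hBA.subset haA haB (hu a)
        (fun b _ _ => (hu b).le)
    have hdB := (hD B hB).1
    have hdA : 0 < D A := by
      have hne : D A ≠ 0 := by
        intro h0
        have hcard := ((hD A hA).2).1 h0
        have : B.card < A.card := Finset.card_lt_card hBA
        have : 1 ≤ B.card := Finset.one_le_card.2 hB
        omega
      exact lt_of_le_of_ne (hD A hA).1 (Ne.symm hne)
    rw [sumsub A A hA (subset_refl A), sumsub B B hB (subset_refl B),
      sumsub A B hA hBA.subset, deferEq A hA, deferEq B hB]
    exact key_iff _ _ _ _ hsA hsB hlt hdA hdB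
  constructor
  · intro hmono A B hB hBA
    exact (main A B hB hBA).2 (hmono A B hB hBA.subset)
  · intro hA4 A B hB hBA
    rcases eq_or_ne B A with rfl | hne
    · exact le_refl _
    · exact (main A B hB (ssubset_of_subset_of_ne hBA hne)).1 (hA4 A B hB
        (ssubset_of_subset_of_ne hBA hne))
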